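/- Let Ψ : (0,∞) → (0,∞) be continuous positive with ∫^∞ du/Ψ(u) < +∞ (non-persistence), and let (v̄_t)_{t>0} be the unique solution of dv̄_t/dt = -Ψ(v̄_t) with v̄_t → +∞ as t → 0+, i.e. ∫_{v̄_t}^{∞} du/Ψ(u) = t. Let ξ_x := inf{t ≥ 0 : X_t(x) = 0} where P(X_t(x) = 0) = exp(-x·v̄_t). Then (ξ_x)_{x≥0} is such that Z(x) := ξ_x satisfies: Z is an extremal-F process with F(z) = exp(-v̄_z), provided ξ_{x+y} = max(ξ_x, ξ'_y) with ξ'_y independent of (ξ_u, u ≤ x) and distributed as ξ_y. -/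

import Mathlib

open MeasureTheory ProbabilityTheory Real Filter

private lemma sInf_img_single (f : ℕ → ℝ) (n : ℕ) :
    sInf (f '' Set.Ico n (n + 1)) = f n := by
  have h1 : Set.Ico n (n + 1) = {n} := by ext a; simp only [Set.mem_Ico, Set.mem_singleton_iff]; omega
  rw [h1, Set.image_singleton, csInf_singleton]

private lemma sInf_img_succ (f : ℕ → ℝ) {i n : ℕ} (h : i < n) :
    sInf (f '' Set.Ico i (n + 1)) = min (f n) (sInf (f '' Set.Ico i n)) := by
  have h1 : Set.Ico i (n + 1) = insert n (Set.Ico i n) := by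
    ext a; simp only [Set.mem_Ico, Set.mem_insert_iff]; omega
  rw [h1, Set.image_insert_eq,
    csInf_insert ((Set.finite_Ico i n).image f).bddBelow ((Set.nonempty_Ico.2 h).image f)]

private lemma sInf_img_update (z : ℕ → ℝ) (m : ℕ) {i : ℕ} (hi : i ≤ m) :
    sInf (Function.update z m (min (z m) (z (m + 1))) '' Set.Ico i (m + 1)) =
      sInf (z '' Set.Ico i (m + 2)) := by
  set z' := Function.update z m (min (z m) (z (m + 1))) with hz'
  have hz'm : z' m = min (z m) (z (m + 1)) := Function.update_self _ _ _
  rcases eq_or_lt_of_le hi with rfl | hlt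
  · rw [sInf_img_single, hz'm, show (i + 2) = (i + 1) + 1 from rfl,
      sInf_img_succ z (Nat.lt_succ_self i), sInf_img_single, min_comm]
  · have himg : z' '' Set.Ico i m = z '' Set.Ico i m :=
      Set.image_congr fun x hx => Function.update_of_ne (Nat.ne_of_lt hx.2) _ _
    rw [sInf_img_succ z' hlt, himg, hz'm, show (m + 2) = (m + 1) + 1 from rfl,
      sInf_img_succ z (hlt.trans (Nat.lt_succ_self m)), sInf_img_succ z hlt,
      min_assoc, min_left_comm]

/-- Extinction times of a flow of subcritical non-persistent CSBPs form an
extremal-`F` process with `F(z) = exp(-v̄_z)`, where `v̄` solves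
`∫_{v̄_t}^∞ du/Ψ(u) = t` and `P(ξ_x ≤ z) = exp(-x v̄_z)`, provided
`ξ_{x+y} = max(ξ_x, ξ'_y)` with `ξ'_y` independent of the past and distributed
as `ξ_y`. -/
theorem extinction_times_extremal {Ω : Type*} [MeasurableSpace Ω]
    (P : Measure Ω) [IsProbabilityMeasure P]
    (Ψ : ℝ → ℝ) (hcont : ContinuousOn Ψ (Set.Ioi 0))
    (hpos : ∀ u : ℝ, 0 < u → 0 < Ψ u)
    (hfin : IntegrableOn (fun u => 1 / Ψ u) (Set.Ioi 1))
    (vbar : ℝ → ℝ)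
    (hvbar : ∀ t : ℝ, 0 < t → 0 < vbar t ∧
      (∫ u in Set.Ioi (vbar t), 1 / Ψ u) = t)
    (ξ : ℝ → Ω → ℝ) (hmeas : ∀ x : ℝ, Measurable (ξ x))
    (hlaw : ∀ x : ℝ, 0 ≤ x → ∀ z : ℝ, 0 < z →
      P {ω | ξ x ω ≤ z} = ENNReal.ofReal (Real.exp (-(x * vbar z))))
    (hmax : ∀ x y : ℝ, 0 ≤ x → 0 ≤ y → ∃ ξ' : Ω → ℝ, Measurable ξ' ∧
      Indep (MeasurableSpace.comap ξ' (inferInstance : MeasurableSpace ℝ))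
        (⨆ u ∈ Set.Icc (0:ℝ) x,
          MeasurableSpace.comap (ξ u) (inferInstance : MeasurableSpace ℝ)) P ∧
      Measure.map ξ' P = Measure.map (ξ y) P ∧
      (∀ᵐ ω ∂P, ξ (x + y) ω = max (ξ x ω) (ξ' ω))) :
    ∀ (n : ℕ) (x z : ℕ → ℝ), (∀ i, i < n → 0 ≤ x i) →
      (∀ i j, i ≤ j → j < n → x i ≤ x j) → (∀ i, i < n → 0 < z i) →
      P (⋂ i ∈ Finset.range n, {ω | ξ (x i) ω ≤ z i}) =
        ENNReal.ofReal (∏ i ∈ Finset.range n,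
          Real.exp (-(x i - if i = 0 then 0 else x (i - 1)) *
            vbar (sInf (z '' Set.Ico i n)))) := by
  intro n x
  induction n with
  | zero => intro z _ _ _; simp
  | succ n ih =>
    intro z hx hmono hz
    rcases n with _ | m
    · -- base case `n = 1`
      have hr : Finset.range (0 + 1) = {0} := rfl
      rw [hr, Finset.set_biInter_singleton, Finset.prod_singleton, if_pos rfl]
      rw [show ((0:ℕ) + 1) = 0 + 1 from rfl, sInf_img_single z 0,
        hlaw (x 0) (hx 0 Nat.one_pos) (z 0) (hz 0 Nat.one_pos)]
      ring_nf
    · -- inductive step, `n = m + 2`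
      have hxm : 0 ≤ x m := hx m (by omega)
      have hy0 : (0:ℝ) ≤ x (m + 1) - x m :=
        sub_nonneg.2 (hmono m (m + 1) (by omega) (by omega))
      obtain ⟨ξ', hmeas', hindep, hmap, hae⟩ := hmax (x m) (x (m + 1) - x m) hxm hy0
      rw [show x m + (x (m + 1) - x m) = x (m + 1) by ring] at hae
      have hzn : 0 < z (m + 1) := hz (m + 1) (by omega)
      set z' := Function.update z m (min (z m) (z (m + 1))) with hz'def
      set S : Set Ω := ⋂ i ∈ Finset.range (m + 1), {ω | ξ (x i) ω ≤ z' i} with hS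
      set C : Set Ω := {ω | ξ' ω ≤ z (m + 1)} with hC
      -- identify the intersected event up to a null set
      have hset : (⋂ i ∈ Finset.range (m + 1), {ω | ξ (x i) ω ≤ z i}) ∩
          {ω | ξ (x m) ω ≤ z (m + 1)} = S := by
        ext ω
        simp only [hS, Set.mem_inter_iff, Set.mem_iInter, Set.mem_setOf_eq, Finset.mem_range]
        constructor
        · rintro ⟨h1, h2⟩ i hi
          rcases eq_or_ne i m with rfl | hne
          · rw [hz'def, Function.update_self]; exact le_min (h1 i hi) h2
          · rw [hz'def, Function.update_of_ne hne]; exact h1 i hi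
        · intro h
          refine ⟨fun i hi => ?_, ?_⟩
          · rcases eq_or_ne i m with rfl | hne
            · have := h i hi; rw [hz'def, Function.update_self] at this
              exact this.trans (min_le_left _ _)
            · have := h i hi; rwa [hz'def, Function.update_of_ne hne] at this
          · have := h m (by omega); rw [hz'def, Function.update_self] at this
            exact this.trans (min_le_right _ _)
      have haeset : ((⋂ i ∈ Finset.range (m + 2), {ω | ξ (x i) ω ≤ z i}) : Set Ω) =ᵐ[P] ((S ∩ C : Set Ω)) := by
        have h0 : (⋂ i ∈ Finset.range (m + 2), {ω | ξ (x i) ω ≤ z i}) =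
            (⋂ i ∈ Finset.range (m + 1), {ω | ξ (x i) ω ≤ z i}) ∩
              {ω | ξ (x (m + 1)) ω ≤ z (m + 1)} := by
          rw [Finset.range_add_one, Finset.set_biInter_insert, Set.inter_comm]
        rw [h0, ← hset]
        have h1 : ({ω | ξ (x (m + 1)) ω ≤ z (m + 1)} : Set Ω) =ᵐ[P]
            (({ω | ξ (x m) ω ≤ z (m + 1)} ∩ C : Set Ω)) := by
          rw [Filter.eventuallyEq_set]
          filter_upwards [hae] with ω hω
          simp only [hC, Set.mem_setOf_eq, Set.mem_inter_iff, hω, max_le_iff, sup_le_iff]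
        rw [Set.inter_assoc]
        exact Filter.EventuallyEq.inter (Filter.EventuallyEq.rfl) h1
      -- measurability of `S` with respect to the past σ-algebra
      have hSmeas : MeasurableSet[⨆ u ∈ Set.Icc (0:ℝ) (x m),
          MeasurableSpace.comap (ξ u) (inferInstance : MeasurableSpace ℝ)] S := by
        refine (Finset.range (m + 1)).finite_toSet.measurableSet_biInter fun i hi => ?_
        have hmem : x i ∈ Set.Icc (0:ℝ) (x m) := by
          refine ⟨hx i (by simp at hi; omega), hmono i m (by simp at hi; omega) (by omega)⟩
        have hle : MeasurableSpace.comap (ξ (x i))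
            (inferInstance : MeasurableSpace ℝ) ≤ ⨆ u ∈ Set.Icc (0:ℝ) (x m),
            MeasurableSpace.comap (ξ u) (inferInstance : MeasurableSpace ℝ) :=
          le_biSup (fun u => MeasurableSpace.comap (ξ u)
            (inferInstance : MeasurableSpace ℝ)) hmem
        exact hle _ ⟨Set.Iic (z' i), measurableSet_Iic, rfl⟩
      have hCmeas : MeasurableSet[MeasurableSpace.comap ξ'
          (inferInstance : MeasurableSpace ℝ)] C :=
        ⟨Set.Iic (z (m + 1)), measurableSet_Iic, rfl⟩
      have hPmul : P (S ∩ C) = P S * P C := by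
        have := (Indep_iff _ _ P).1 hindep C S hCmeas hSmeas
        rw [Set.inter_comm, this, mul_comm]
      -- law of the increment
      have hPC : P C = ENNReal.ofReal (Real.exp (-((x (m + 1) - x m) * vbar (z (m + 1))))) := by
        have h1 : P C = Measure.map ξ' P (Set.Iic (z (m + 1))) := by
          rw [Measure.map_apply hmeas' measurableSet_Iic]; rfl
        rw [h1, hmap, Measure.map_apply (hmeas _) measurableSet_Iic,
          show ξ (x (m + 1) - x m) ⁻¹' Set.Iic (z (m + 1)) =
            {ω | ξ (x (m + 1) - x m) ω ≤ z (m + 1)} from rfl,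
          hlaw _ hy0 _ hzn]
      -- induction hypothesis for the updated levels
      have hz'pos : ∀ i, i < m + 1 → 0 < z' i := by
        intro i hi
        rcases eq_or_ne i m with rfl | hne
        · rw [hz'def, Function.update_self]; exact lt_min (hz i (by omega)) hzn
        · rw [hz'def, Function.update_of_ne hne]; exact hz i (by omega)
      have hIH := ih z' (fun i hi => hx i (by omega))
        (fun i j hij hj => hmono i j hij (by omega)) hz'pos
      have hprodnn : (0:ℝ) ≤ ∏ i ∈ Finset.range (m + 1),
          Real.exp (-(x i - if i = 0 then 0 else x (i - 1)) *
            vbar (sInf (z' '' Set.Ico i (m + 1)))) :=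
        Finset.prod_nonneg fun i _ => (Real.exp_pos _).le
      rw [measure_congr haeset, hPmul, hIH, hPC, ← ENNReal.ofReal_mul hprodnn]
      congr 1
      conv_rhs => rw [Finset.prod_range_succ]
      congr 1
      · refine Finset.prod_congr rfl fun i hi => ?_
        rw [sInf_img_update z m (Nat.lt_succ_iff.1 (Finset.mem_range.1 hi))]
      · rw [show (m + 1 + 1) = (m + 1) + 1 from rfl, sInf_img_single z (m + 1)]
        simp only [Nat.succ_ne_zero, if_false, Nat.add_sub_cancel]
        ring_nf
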